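/- arXiv:2605.30473 — 3 statements merged into one kernel-verified Lean document; each statement's English description precedes it below -/
import Mathlib

section
/- On ℓ²(ℕ) with 0 < q < 1, define a = S∘√(1−q^{2N}), where S is the backward shift and √(1−q^{2N}) is the diagonal operator e_i ↦ √(1−q^{2i}) e_i. Then a satisfies the quantum disk relation q²·a*a − a·a* = (q² − 1)·1, i.e. q²(a*a) − aa* = (q²−1)·Id. -/
open ContinuousLinearMap

noncomputable def e (i : ℕ) : lp (fun _ : ℕ => ℂ) 2 := lp.single 2 i 1

local notation "H" => lp (fun _ : ℕ => ℂ) 2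

lemma dense_span_e : Dense (Submodule.span ℂ (Set.range e) : Set H) := by
  intro f
  have hsum : HasSum (fun i : ℕ => lp.single 2 i (f i : ℂ)) f :=
    lp.hasSum_single ENNReal.ofNat_ne_top f
  refine mem_closure_of_tendsto hsum.tendsto_sum_nat (Filter.Eventually.of_forall fun n => ?_)
  refine Submodule.sum_mem _ fun i _ => ?_
  have : lp.single 2 i (f i : ℂ) = (f i : ℂ) • e i := by
    rw [e, ← lp.single_smul]; norm_num
  rw [this]
  exact Submodule.smul_mem _ _ (Submodule.subset_span ⟨i, rfl⟩)

lemma ext_e {v w : H} (h : ∀ j, inner (𝕜 := ℂ) (e j) v = inner (𝕜 := ℂ) (e j) w) : v = w := by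
  refine lp.ext (funext fun j => ?_)
  have hv := lp.inner_single_left (𝕜 := ℂ) j (1 : ℂ) v
  have hw := lp.inner_single_left (𝕜 := ℂ) j (1 : ℂ) w
  have := h j
  rw [e, hv, hw] at this
  simpa using this

theorem stmt3 (q : ℝ) (hq0 : 0 < q) (hq1 : q < 1)
    (S M a : lp (fun _ : ℕ => ℂ) 2 →L[ℂ] lp (fun _ : ℕ => ℂ) 2)
    (hS0 : S (e 0) = 0) (hS : ∀ i : ℕ, S (e (i + 1)) = e i)
    (hM : ∀ i : ℕ, M (e i) = (Real.sqrt (1 - q ^ (2 * i)) : ℂ) • e i)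
    (ha : a = S * M) :
    ((q : ℂ) ^ 2) • (adjoint a * a) - a * adjoint a
      = (((q : ℂ) ^ 2 - 1)) • (1 : lp (fun _ : ℕ => ℂ) 2 →L[ℂ] lp (fun _ : ℕ => ℂ) 2) := by
  set c : ℕ → ℂ := fun i => (Real.sqrt (1 - q ^ (2 * i)) : ℂ) with hc
  have hqpow : ∀ i : ℕ, q ^ (2 * i) ≤ 1 := fun i =>
    pow_le_one₀ hq0.le hq1.le
  have hcsq : ∀ i : ℕ, c i * c i = 1 - (q : ℂ) ^ (2 * i) := by
    intro i
    have h := Real.mul_self_sqrt (by linarith [hqpow i] : (0:ℝ) ≤ 1 - q ^ (2*i))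
    rw [hc]
    dsimp only
    rw [← Complex.ofReal_mul, h]
    push_cast; ring
  have hc0 : c 0 = 0 := by simp [hc]
  -- action of a on basis
  have ha0 : a (e 0) = 0 := by
    rw [ha, ContinuousLinearMap.mul_apply, hM 0]
    simp
  have haS : ∀ i : ℕ, a (e (i + 1)) = c (i + 1) • e i := by
    intro i
    rw [ha]
    rw [ContinuousLinearMap.mul_apply, hM (i+1), map_smul, hS i]
  -- inner products of basis
  have hee : ∀ i j : ℕ, inner (𝕜 := ℂ) (e i) (e j) = if i = j then (1:ℂ) else 0 := by
    intro i j
    rw [e, lp.inner_single_left, e, lp.single_apply]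
    split_ifs with h
    · subst h; simp [lp.single_apply_self]
    · simp [lp.single_apply_ne _ _ _ (Ne.symm h), h]
  have hadj : ∀ i : ℕ, adjoint a (e i) = c (i + 1) • e (i + 1) := by
    intro i
    refine ext_e fun j => ?_
    rw [adjoint_inner_right]
    cases j with
    | zero => simp [ha0, inner_smul_right, hee]
    | succ k =>
      rw [haS k, inner_smul_left, inner_smul_right, hee, hee]
      by_cases h : k = i
      · subst h; simp [hc, Complex.conj_ofReal]
      · simp [h]
  refine ContinuousLinearMap.ext_on dense_span_e ?_
  rintro x ⟨i, rfl⟩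
  simp only [sub_apply, smul_apply, ContinuousLinearMap.mul_apply, ContinuousLinearMap.one_apply]
  cases i with
  | zero =>
    rw [ha0, map_zero, smul_zero, hadj 0, map_smul, haS 0, smul_smul, hcsq, zero_sub, ← neg_smul]
    congr 1
    push_cast; ring
  | succ k =>
    rw [haS k, map_smul, hadj k, hadj (k + 1), map_smul, haS (k + 1),
        smul_smul (c (k + 1)) (c (k + 1)), hcsq, smul_smul (c (k + 2)) (c (k + 2)), hcsq,
        smul_smul, ← sub_smul]
    congr 1
    push_cast; ring
end

section
/- Let a ∈ B(H) satisfy q² a*a − aa* = (q²−1)·1 with 0 < q < 1, and let ξ, ζ ∈ ker(a) with ⟨ξ, ζ⟩ = 0. Then for all natural numbers n, m: ⟨(a*)ⁿ ξ, (a*)ᵐ ζ⟩ = 0. Moreover for ξ ∈ ker(a), ‖(a*)ⁿ ξ‖² = (∏_{s=1}^{n}(1−q^{2s}))·‖ξ‖². -/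
open ContinuousLinearMap

theorem stmt6 {H : Type*} [NormedAddCommGroup H] [InnerProductSpace ℂ H] [CompleteSpace H]
    (q : ℝ) (hq0 : 0 < q) (hq1 : q < 1) (a : H →L[ℂ] H)
    (hrel : ((q : ℂ) ^ 2) • (adjoint a * a) - a * adjoint a
      = ((q : ℂ) ^ 2 - 1) • (1 : H →L[ℂ] H))
    (ξ ζ : H) (hξ : a ξ = 0) (hζ : a ζ = 0) (horth : (inner ℂ ξ ζ : ℂ) = 0) :
    (∀ n m : ℕ, (inner ℂ (((adjoint a) ^ n) ξ) (((adjoint a) ^ m) ζ) : ℂ) = 0) ∧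
    (∀ n : ℕ, ‖((adjoint a) ^ n) ξ‖ ^ 2
      = (∏ s ∈ Finset.Icc 1 n, (1 - q ^ (2 * s))) * ‖ξ‖ ^ 2) := by
  have haa : a * adjoint a = ((q : ℂ) ^ 2) • (adjoint a * a)
      - ((q : ℂ) ^ 2 - 1) • (1 : H →L[ℂ] H) := by
    rw [← hrel]; abel
  -- key vector identity on kernel vectors
  have key : ∀ (v : H), a v = 0 → ∀ n : ℕ,
      a (((adjoint a) ^ (n + 1)) v)
        = (1 - (q : ℂ) ^ (2 * (n + 1))) • ((adjoint a) ^ n) v := by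
    intro v hv n
    induction n with
    | zero =>
      have : a ((adjoint a) v) = (a * adjoint a) v := rfl
      rw [pow_one, pow_zero, one_apply_eq_self, this, haa]
      simp [mul_apply_eq_comp, hv]
      rw [← neg_smul]
      congr 1
      ring
    | succ k ih =>
      have h1 : ((adjoint a) ^ (k + 2)) v = adjoint a (((adjoint a) ^ (k + 1)) v) := by
        rw [pow_succ']; rfl
      rw [h1]
      have h2 : a (adjoint a (((adjoint a) ^ (k + 1)) v))
          = (a * adjoint a) (((adjoint a) ^ (k + 1)) v) := rfl
      rw [h2, haa]
      simp only [sub_apply, smul_apply, mul_apply_eq_comp, one_apply_eq_self]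
      rw [ih]
      have h3 : adjoint a ((1 - (q : ℂ) ^ (2 * (k + 1))) • ((adjoint a) ^ k) v)
          = (1 - (q : ℂ) ^ (2 * (k + 1))) • ((adjoint a) ^ (k + 1)) v := by
        rw [map_smul, pow_succ']; rfl
      rw [h3, smul_smul, ← sub_smul]
      congr 1
      ring
  constructor
  · intro n m
    induction m generalizing n with
    | zero =>
      simp only [pow_zero, one_apply_eq_self]
      cases n with
      | zero => simpa using horth
      | succ k =>
        have : (inner ℂ (((adjoint a) ^ (k + 1)) ξ) ζ : ℂ)
            = inner ℂ (((adjoint a) ^ k) ξ) (a ζ) := by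
          rw [pow_succ', mul_apply_eq_comp]
          exact adjoint_inner_left a _ _
        rw [this, hζ, inner_zero_right]
    | succ m ih =>
      have : (inner ℂ (((adjoint a) ^ n) ξ) (((adjoint a) ^ (m + 1)) ζ) : ℂ)
          = inner ℂ (a (((adjoint a) ^ n) ξ)) (((adjoint a) ^ m) ζ) := by
        rw [pow_succ', mul_apply_eq_comp]
        exact adjoint_inner_right a _ _
      rw [this]
      cases n with
      | zero => simp [hξ]
      | succ k =>
        rw [key ξ hξ k, inner_smul_left, ih k, mul_zero]
  · intro n
    induction n with
    | zero => simp
    | succ k ih =>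
      have hc : (inner ℂ (((adjoint a) ^ (k + 1)) ξ) (((adjoint a) ^ (k + 1)) ξ) : ℂ)
          = (1 - (q : ℂ) ^ (2 * (k + 1))) * inner ℂ (((adjoint a) ^ k) ξ) (((adjoint a) ^ k) ξ) := by
        have he : ((adjoint a) ^ (k + 1)) ξ = adjoint a (((adjoint a) ^ k) ξ) := by
          rw [pow_succ', mul_apply_eq_comp]
        have h1 : (inner ℂ (adjoint a (((adjoint a) ^ k) ξ)) (((adjoint a) ^ (k + 1)) ξ) : ℂ)
            = inner ℂ (((adjoint a) ^ k) ξ) (a (((adjoint a) ^ (k + 1)) ξ)) :=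
          adjoint_inner_left a _ _
        nth_rewrite 1 [he]
        rw [h1, key ξ hξ k, inner_smul_right]
      rw [inner_self_eq_norm_sq_to_K, inner_self_eq_norm_sq_to_K] at hc
      have hre : (‖((adjoint a) ^ (k + 1)) ξ‖ : ℝ) ^ 2
          = (1 - q ^ (2 * (k + 1))) * ‖((adjoint a) ^ k) ξ‖ ^ 2 := by
        have := congrArg Complex.re hc
        simpa [← Complex.ofReal_pow, pow_two] using this
      rw [hre, ih, Finset.prod_Icc_succ_top (by omega : 1 ≤ k + 1)]
      ring
end

section
/- Let a, k be bounded operators on H with ak = ka and a*k = ka*, satisfying q²a*a − aa* = (q²−1)·1 and q²k k* − k*k = (q²−1)·1 (so k* satisfies the disk relation), with 0 < q < 1. Let ξ, ζ ∈ ker(a) ∩ ker(k*) be orthogonal. Then for all n₁, m₁, n₂, m₂ ∈ ℕ, ⟨(a*)^{n₁} k^{m₁} ξ, (a*)^{n₂} k^{m₂} ζ⟩ = 0. -/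
open ContinuousLinearMap

private lemma red18 {H : Type*} [NormedAddCommGroup H] [InnerProductSpace ℂ H] [CompleteSpace H]
    (a : H →L[ℂ] H) (c : ℂ)
    (hrel : a * adjoint a = c • (adjoint a * a) + (1 - c) • (1 : H →L[ℂ] H)) :
    ∀ m (y : H), a y = 0 →
      a (((adjoint a) ^ (m + 1)) y) = (1 - c ^ (m + 1)) • (((adjoint a) ^ m) y) := by
  intro m
  induction m with
  | zero =>
    intro y hy
    have h : a ((adjoint a) y) = (a * adjoint a) y := rfl
    simp only [pow_one, pow_zero, one_apply_eq_self, h, hrel, add_apply, smul_apply, mul_apply_eq_comp, hy,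
      map_zero, smul_zero, zero_add, pow_one]
  | succ m ih =>
    intro y hy
    have h1 : ((adjoint a) ^ (m + 2)) y = adjoint a (((adjoint a) ^ (m + 1)) y) := by
      rw [pow_succ']; rfl
    have h2 : ∀ z : H, a (adjoint a z) = c • (adjoint a (a z)) + (1 - c) • z := by
      intro z
      have : a (adjoint a z) = (a * adjoint a) z := rfl
      rw [this, hrel]; rfl
    have h3 : (adjoint a) (((adjoint a) ^ m) y) = ((adjoint a) ^ (m + 1)) y := by
      rw [pow_succ']; rfl
    rw [h1, h2, ih y hy, map_smul, h3, smul_smul, ← add_smul]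
    congr 1
    ring

private lemma orth18 {H : Type*} [NormedAddCommGroup H] [InnerProductSpace ℂ H] [CompleteSpace H]
    (a : H →L[ℂ] H) (c : ℂ)
    (hrel : a * adjoint a = c • (adjoint a * a) + (1 - c) • (1 : H →L[ℂ] H)) :
    ∀ n m (x y : H), a x = 0 → a y = 0 → (inner ℂ x y : ℂ) = 0 →
      (inner ℂ (((adjoint a) ^ n) x) (((adjoint a) ^ m) y) : ℂ) = 0 := by
  intro n
  induction n with
  | zero =>
    intro m x y hx hy hxy
    cases m with
    | zero => simpa using hxy
    | succ m =>
      have h1 : ((adjoint a) ^ (m + 1)) = adjoint (a ^ (m + 1)) := by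
        rw [← star_eq_adjoint, ← star_eq_adjoint, ← star_pow]
      have h2 : (a ^ (m + 1)) x = 0 := by
        rw [pow_succ, mul_apply_eq_comp, hx, map_zero]
      simp only [pow_zero, one_apply_eq_self, h1, adjoint_inner_right, h2, inner_zero_left]
  | succ n ih =>
    intro m x y hx hy hxy
    have h1 : ((adjoint a) ^ (n + 1)) x = adjoint a (((adjoint a) ^ n) x) := by
      rw [pow_succ']; rfl
    rw [h1, adjoint_inner_left]
    cases m with
    | zero =>
      simp [hy]
    | succ m =>
      rw [red18 a c hrel m y hy, inner_smul_right, ih m x y hx hy hxy, mul_zero]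

theorem stmt18 {H : Type*} [NormedAddCommGroup H] [InnerProductSpace ℂ H] [CompleteSpace H]
    (q : ℝ) (hq0 : 0 < q) (hq1 : q < 1) (a k : H →L[ℂ] H)
    (hak : a * k = k * a) (hak' : adjoint a * k = k * adjoint a)
    (hdiska : ((q : ℂ) ^ 2) • (adjoint a * a) - a * adjoint a
      = ((q : ℂ) ^ 2 - 1) • (1 : H →L[ℂ] H))
    (hdiskk : ((q : ℂ) ^ 2) • (k * adjoint k) - adjoint k * k
      = ((q : ℂ) ^ 2 - 1) • (1 : H →L[ℂ] H))
    (ξ ζ : H) (hξa : a ξ = 0) (hξk : adjoint k ξ = 0)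
    (hζa : a ζ = 0) (hζk : adjoint k ζ = 0)
    (horth : (inner ℂ ξ ζ : ℂ) = 0) :
    ∀ n₁ m₁ n₂ m₂ : ℕ,
      (inner ℂ (((adjoint a) ^ n₁) ((k ^ m₁) ξ)) (((adjoint a) ^ n₂) ((k ^ m₂) ζ)) : ℂ) = 0 := by
  set c : ℂ := (q : ℂ) ^ 2 with hc
  have hrela : a * adjoint a = c • (adjoint a * a) + (1 - c) • (1 : H →L[ℂ] H) := by
    have := hdiska
    rw [sub_eq_iff_eq_add] at this
    rw [this]; module
  have hrelk : (adjoint k) * adjoint (adjoint k)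
      = c • (adjoint (adjoint k) * adjoint k) + (1 - c) • (1 : H →L[ℂ] H) := by
    rw [adjoint_adjoint]
    have := hdiskk
    rw [sub_eq_iff_eq_add] at this
    rw [this]; module
  intro n₁ m₁ n₂ m₂
  have hcomm : ∀ m : ℕ, a * k ^ m = k ^ m * a := fun m =>
    ((Commute.symm hak).pow_left m).symm
  have hka : ∀ (m : ℕ) (v : H), a v = 0 → a ((k ^ m) v) = 0 := by
    intro m v hv
    have : a ((k ^ m) v) = (a * k ^ m) v := rfl
    rw [this, hcomm m, mul_apply_eq_comp, hv, map_zero]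
  have hkpow : ∀ m : ℕ, (adjoint (adjoint k)) ^ m = k ^ m := by
    intro m; rw [adjoint_adjoint]
  have horthk : (inner ℂ ((k ^ m₁) ξ) ((k ^ m₂) ζ) : ℂ) = 0 := by
    have := orth18 (adjoint k) c hrelk m₁ m₂ ξ ζ hξk hζk horth
    rwa [hkpow, hkpow] at this
  exact orth18 a c hrela n₁ n₂ _ _ (hka m₁ ξ hξa) (hka m₂ ζ hζa) horthk
end
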